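/- Let G be an (n,k,λ,μ)-strongly regular graph on vertex set V with integer Laplacian matrix L, and let u, v be adjacent vertices. Define c : V → ℤ by c u = k + μ − λ − 1, c v = −(k + μ − λ − 1), and for w ∉ {u,v}, c w = (1 if w is adjacent to u else 0) − (1 if w is adjacent to v else 0). Then the vector-matrix product c ᵥ* L (i.e., the integer linear combination ∑_w c w · (row w of L)) equals (n·μ) • (e_u − e_v), where e_w denotes the standard basis vector supported at w. -/

import Mathlib

open Finset Matrix

theorem stmt5 {V : Type*} [Fintype V] [DecidableEq V] (G : SimpleGraph V)
    [DecidableRel G.Adj] {n k l μ : ℕ} (hsrg : G.IsSRGWith n k l μ)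
    (u v : V) (huv : G.Adj u v) (c : V → ℤ)
    (hcu : c u = (k : ℤ) + μ - l - 1)
    (hcv : c v = -((k : ℤ) + μ - l - 1))
    (hcw : ∀ w, w ≠ u → w ≠ v →
      c w = (if G.Adj w u then 1 else 0) - (if G.Adj w v then 1 else 0)) :
    ∑ w, c w • (G.lapMatrix ℤ w) =
      ((n * μ : ℕ) : ℤ) • (Pi.single u 1 - Pi.single v 1) := by
  classical
  set A := G.adjMatrix ℤ with hA
  set d : V → ℤ := Pi.single u 1 - Pi.single v 1 with hd
  have hne : u ≠ v := huv.ne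
  have hAd : ∀ w, (A *ᵥ d) w =
      (if G.Adj w u then 1 else 0) - (if G.Adj w v then 1 else 0) := by
    intro w
    simp [hd, Matrix.mulVec, dotProduct, Pi.single_apply, mul_sub, mul_ite,
      Finset.sum_sub_distrib, Finset.sum_ite_eq', A]
  have hCd : ∀ w, (Gᶜ.adjMatrix ℤ *ᵥ d) w =
      (if Gᶜ.Adj w u then 1 else 0) - (if Gᶜ.Adj w v then 1 else 0) := by
    intro w
    simp [hd, Matrix.mulVec, dotProduct, Pi.single_apply, mul_sub, mul_ite,
      Finset.sum_sub_distrib, Finset.sum_ite_eq']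
  have hdu : d u = 1 := by simp [hd, Pi.single_apply, hne]
  have hdv : d v = -1 := by simp [hd, Pi.single_apply, hne.symm]
  have hcd : c = ((k : ℤ) + μ - l) • d + A *ᵥ d := by
    funext w
    rcases eq_or_ne w u with rfl | hwu
    · rw [hcu]
      simp [hAd w, hdu, huv, G.irrefl]
      ring
    rcases eq_or_ne w v with rfl | hwv
    · rw [hcv]
      simp [hAd w, hdv, huv.symm, G.irrefl]
      ring
    · rw [hcw w hwu hwv]
      have : d w = 0 := by simp [hd, Pi.single_apply, hwu, hwv]
      simp [hAd w, this]
  have hL : G.lapMatrix ℤ = (k : ℤ) • (1 : Matrix V V ℤ) - A := by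
    have h1 : (k : ℤ) • (1 : Matrix V V ℤ)
        = Matrix.diagonal (fun _ : V => (k : ℤ)) := by
      rw [← Matrix.diagonal_one, ← Matrix.diagonal_smul]
      ext i j
      simp [Matrix.diagonal_apply]
    rw [SimpleGraph.lapMatrix, h1]
    congr 1
    ext i j
    simp [SimpleGraph.degMatrix, Matrix.diagonal_apply, hsrg.regular i]
  have hsum : ∑ w, c w • G.lapMatrix ℤ w = G.lapMatrix ℤ *ᵥ c := by
    funext x
    rw [Finset.sum_apply]
    simp only [Pi.smul_apply, smul_eq_mul, Matrix.mulVec, dotProduct]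
    exact Finset.sum_congr rfl fun w _ => by
      rw [mul_comm, (G.isSymm_lapMatrix (R := ℤ)).apply]
  have hCmul : Gᶜ.adjMatrix ℤ *ᵥ d = -d - A *ᵥ d := by
    funext w
    rw [hCd w]
    simp only [Pi.sub_apply, Pi.neg_apply]
    rw [hAd w]
    rcases eq_or_ne w u with rfl | hwu
    · simp [hdu, SimpleGraph.compl_adj, hne, huv, G.irrefl]
    rcases eq_or_ne w v with rfl | hwv
    · simp [hdv, SimpleGraph.compl_adj, hne.symm, huv.symm, G.irrefl]
    · have h0 : d w = 0 := by simp [hd, Pi.single_apply, hwu, hwv]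
      simp only [Pi.sub_apply, Pi.neg_apply, h0, neg_zero, zero_sub]
      simp [SimpleGraph.compl_adj, hwu, hwv]
      split_ifs <;> ring
  have h2 : A * A = (k : ℤ) • (1 : Matrix V V ℤ) + (l : ℤ) • A
      + (μ : ℤ) • Gᶜ.adjMatrix ℤ := by
    have := hsrg.matrix_eq (α := ℤ)
    rw [pow_two] at this
    rw [this]
    simp [Nat.cast_smul_eq_nsmul]
    rfl
  have hkl : l + 1 ≤ k := by
    have h1 := huv.card_commonNeighbors_lt_degree
    rw [hsrg.of_adj u v huv, hsrg.regular u] at h1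
    omega
  have hkn : k + 1 ≤ n := by
    have h1 := G.degree_lt_card_verts u
    rw [hsrg.regular u, hsrg.card] at h1
    omega
  have hs : (k : ℤ) * ((k : ℤ) + μ - l) - k + μ = ((n * μ : ℕ) : ℤ) := by
    have h0 : 0 < n := by omega
    have hp := SimpleGraph.IsSRGWith.param_eq G hsrg h0
    have e1 : ((k - l - 1 : ℕ) : ℤ) = (k : ℤ) - l - 1 := by omega
    have e2 : ((n - k - 1 : ℕ) : ℤ) = (n : ℤ) - k - 1 := by omega
    have hp' : (k : ℤ) * ((k : ℤ) - l - 1) = ((n : ℤ) - k - 1) * μ := by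
      rw [← e1, ← e2]; exact_mod_cast hp
    push_cast
    linear_combination hp'
  have h3 : G.lapMatrix ℤ *ᵥ c = ((k : ℤ) * ((k : ℤ) + μ - l) - k + μ) • d := by
    rw [hcd, hL, Matrix.sub_mulVec, Matrix.smul_mulVec, Matrix.one_mulVec,
      Matrix.mulVec_add, Matrix.mulVec_smul, Matrix.mulVec_mulVec, h2,
      Matrix.add_mulVec, Matrix.add_mulVec, Matrix.smul_mulVec,
      Matrix.smul_mulVec, Matrix.smul_mulVec, Matrix.one_mulVec, hCmul]
    module
  rw [hsum, h3, hs]
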